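/- arXiv:2412.11528 — 2 statements merged into one kernel-verified Lean document; each statement's English description precedes it below -/
import Mathlib

section
/- For every n ≥ 4, w(n,0) = 2·w(n-1,0) - 2·w(n-3,0) + w(n-4,0), where w(n,0) is the number of compositions of n with all parts in {1,2} and zero water cells. -/
/-- A composition of `n`: a list of positive integers summing to `n`. -/
def IsComposition (n : ℕ) (l : List ℕ) : Prop :=
  (∀ x ∈ l, 0 < x) ∧ l.sum = n

/-- All parts of the list lie in {1, 2}. -/
def Parts12 (l : List ℕ) : Prop := ∀ x ∈ l, x = 1 ∨ x = 2

/-- Number of water cells: parts equal to 1 with a part 2 strictly before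
and a part 2 strictly after. -/
noncomputable def waterCells (l : List ℕ) : ℕ :=
  {i : Fin l.length | l.get i = 1 ∧ (∃ j : Fin l.length, j < i ∧ l.get j = 2) ∧
    (∃ j : Fin l.length, i < j ∧ l.get j = 2)}.ncard

/-- `w n k`: number of compositions of `n` with parts in {1,2} and exactly `k` water cells. -/
noncomputable def w (n k : ℕ) : ℕ :=
  {l : List ℕ | Parts12 l ∧ l.sum = n ∧ waterCells l = k}.ncard

/-- Diagonal sums of the water-cell array. -/
noncomputable def d (n : ℕ) : ℕ := ∑ k ∈ Finset.range (n + 1), w (n - k) k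

/-- All internal parts (other than the first and last) are even. -/
def InternalEven (l : List ℕ) : Prop := ∀ x ∈ (l.drop 1).dropLast, Even x

section Aux

def block (a b c : ℕ) : List ℕ :=
  List.replicate a 1 ++ (List.replicate b 2 ++ List.replicate c 1)

lemma block_length (a b c : ℕ) : (block a b c).length = a + b + c := by
  simp [block]; ring

lemma block_getElem (a b c p : ℕ) (h : p < (block a b c).length) :
    (block a b c)[p] = if a ≤ p ∧ p < a + b then 2 else 1 := by
  rw [block_length] at h
  simp only [block]
  rcases lt_or_ge p a with h1 | h1
  · rw [List.getElem_append_left (by simpa)]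
    simp [h1, Nat.not_le.mpr h1]
  · rw [List.getElem_append_right (by simpa)]
    simp only [List.length_replicate]
    rcases lt_or_ge p (a + b) with h2 | h2
    · rw [List.getElem_append_left (by simp; omega)]
      simp [h1, h2]
    · rw [List.getElem_append_right (by simp; omega), if_neg (by omega)]
      simp

lemma parts12_block (a b c : ℕ) : Parts12 (block a b c) := by
  intro x hx
  simp [block] at hx
  rcases hx with ⟨_, rfl⟩ | ⟨_, rfl⟩ | ⟨_, rfl⟩ <;> simp

lemma block_sum (a b c : ℕ) : (block a b c).sum = a + 2 * b + c := by
  simp [block, List.sum_replicate]; ring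

def NP (l : List ℕ) : Prop :=
  ∀ i : Fin l.length, ¬(l.get i = 1 ∧ (∃ j : Fin l.length, j < i ∧ l.get j = 2) ∧
      (∃ j : Fin l.length, i < j ∧ l.get j = 2))

lemma waterCells_eq_zero_iff (l : List ℕ) : waterCells l = 0 ↔ NP l := by
  unfold waterCells NP
  rw [Set.ncard_eq_zero (Set.toFinite _), Set.eq_empty_iff_forall_notMem]
  simp only [Set.mem_setOf_eq]

lemma NP_block (a b c : ℕ) : NP (block a b c) := by
  rintro i ⟨h1, ⟨j, hj, hj2⟩, ⟨k, hk, hk2⟩⟩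
  simp only [List.get_eq_getElem] at h1 hj2 hk2
  rw [block_getElem _ _ _ _ i.isLt] at h1
  rw [block_getElem _ _ _ _ j.isLt] at hj2
  rw [block_getElem _ _ _ _ k.isLt] at hk2
  rw [Fin.lt_def] at hj hk
  split_ifs at h1 hj2 hk2 <;> omega

lemma NP_tail (x : ℕ) (t : List ℕ) (h : NP (x :: t)) : NP t := by
  intro i ⟨h1, ⟨j, hj, hj2⟩, ⟨k, hk, hk2⟩⟩
  exact h i.succ ⟨by simpa using h1,
    ⟨j.succ, by simpa using hj, by simpa using hj2⟩,
    ⟨k.succ, by simpa using hk, by simpa using hk2⟩⟩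

lemma struct : ∀ l : List ℕ, Parts12 l → NP l → ∃ a b c, l = block a b c := by
  intro l
  induction l with
  | nil => exact fun _ _ => ⟨0, 0, 0, rfl⟩
  | cons x t ih =>
    intro hp hnp
    obtain ⟨a, b, c, rfl⟩ := ih (fun y hy => hp y (by simp [hy])) (NP_tail _ _ hnp)
    rcases hp x (by simp) with rfl | rfl
    · exact ⟨a + 1, b, c, by simp [block, List.replicate_succ]⟩
    · rcases Nat.eq_zero_or_pos a with rfl | ha
      · exact ⟨0, b + 1, c, by simp [block, List.replicate_succ]⟩
      rcases Nat.eq_zero_or_pos b with rfl | hb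
      · refine ⟨0, 1, a + c, ?_⟩
        simp [block, ← List.replicate_add]
      · exfalso
        have hlen : (2 :: block a b c).length = a + b + c + 1 := by
          simp [block_length]
        have hi : (1 : ℕ) < (2 :: block a b c).length := by omega
        have hj : (0 : ℕ) < (2 :: block a b c).length := by omega
        have hk : (1 + a) < (2 :: block a b c).length := by omega
        refine hnp ⟨1, hi⟩ ⟨?_, ⟨⟨0, hj⟩, ?_, ?_⟩, ⟨⟨1 + a, hk⟩, ?_, ?_⟩⟩
        · show (2 :: block a b c).get ⟨1, hi⟩ = 1
          simp only [List.get_eq_getElem, List.getElem_cons_succ]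
          rw [block_getElem]
          simp; omega
        · exact Fin.mk_lt_mk.mpr (by omega)
        · simp
        · exact Fin.mk_lt_mk.mpr (by omega)
        · show (2 :: block a b c).get ⟨1 + a, hk⟩ = 2
          have : 1 + a = a + 1 := by omega
          simp only [List.get_eq_getElem, this, List.getElem_cons_succ]
          rw [block_getElem]
          simp; omega

lemma block_inj {a b c a' b' c' : ℕ} (hb : 0 < b) (hb' : 0 < b')
    (h : block a b c = block a' b' c') : a = a' ∧ b = b' ∧ c = c' := by
  have hlen : a + b + c = a' + b' + c' := by
    rw [← block_length a b c, ← block_length a' b' c', h]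
  have key : ∀ p, p < a + b + c →
      ((if a ≤ p ∧ p < a + b then 2 else 1) : ℕ) = if a' ≤ p ∧ p < a' + b' then 2 else 1 := by
    intro p hp
    rw [← block_getElem a b c p (by rw [block_length]; omega),
      ← block_getElem a' b' c' p (by rw [block_length]; omega)]
    simp only [h]
  have ha : a = a' := by
    rcases lt_trichotomy a a' with hx | hx | hx
    · have := key a (by omega); split_ifs at this <;> omega
    · exact hx
    · have := key a' (by omega); split_ifs at this <;> omega
  subst ha
  have hab : b = b' := by
    rcases lt_trichotomy b b' with hx | hx | hx
    · have := key (a + b) (by omega); split_ifs at this <;> omega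
    · exact hx
    · have := key (a + b') (by omega); split_ifs at this <;> omega
  omega

def T (n : ℕ) : Finset (ℕ × ℕ) :=
  (Finset.range (n+1)).biUnion (fun y => (Finset.range (y/2)).image (fun i => (y - 2*(i+1), y)))

lemma mem_T (n : ℕ) (p : ℕ × ℕ) :
    p ∈ T n ↔ p.1 < p.2 ∧ p.2 ≤ n ∧ (p.2 - p.1) % 2 = 0 := by
  obtain ⟨x, y⟩ := p
  simp only [T, Finset.mem_biUnion, Finset.mem_range, Finset.mem_image, Prod.mk.injEq]
  constructor
  · rintro ⟨y', hy', i, hi, hx, rfl⟩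
    omega
  · rintro ⟨h1, h2, h3⟩
    exact ⟨y, by omega, (y - x)/2 - 1, by omega, by omega, rfl⟩

lemma card_T (n : ℕ) : (T n).card = ∑ y ∈ Finset.range (n+1), y/2 := by
  rw [T, Finset.card_biUnion]
  · refine Finset.sum_congr rfl fun y _ => ?_
    rw [Finset.card_image_of_injOn, Finset.card_range]
    intro i hi j hj hij
    simp only [Finset.mem_coe, Finset.mem_range] at hi hj
    have := congrArg Prod.fst hij
    simp only at this
    omega
  · intro y _ y' _ hne
    simp only [Finset.disjoint_left, Finset.mem_image, Finset.mem_range]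
    rintro p ⟨i, hi, rfl⟩ ⟨j, hj, hp⟩
    have := congrArg Prod.snd hp
    simp only at this
    exact hne this.symm

lemma sum_div2 (n : ℕ) : ∑ y ∈ Finset.range (n+1), y/2 = n/2 * ((n+1)/2) := by
  induction n with
  | zero => simp
  | succ n ih =>
    rw [Finset.sum_range_succ, ih]
    rcases Nat.even_or_odd n with ⟨q, rfl⟩ | ⟨q, rfl⟩
    · have h1 : (q + q) / 2 = q := by omega
      have h2 : (q + q + 1) / 2 = q := by omega
      rw [h1, h2, show q + q + 1 + 1 = (q+1) + (q+1) by ring, show ((q+1)+(q+1))/2 = q + 1 by omega]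
      ring
    · have h1 : (2*q + 1) / 2 = q := by omega
      have h2 : (2*q + 1 + 1) / 2 = q + 1 := by omega
      have h3 : (2*q + 1 + 1 + 1) / 2 = q + 1 := by omega
      rw [h1, h2, h3]; ring

lemma wzero (n : ℕ) : w n 0 = n/2 * ((n+1)/2) + 1 := by
  classical
  set g : ℕ × ℕ → List ℕ := fun p => block p.1 ((p.2 - p.1)/2) (n - p.2) with hg
  set F : Finset (List ℕ) := insert (List.replicate n 1) ((T n).image g) with hF
  have hset : {l : List ℕ | Parts12 l ∧ l.sum = n ∧ waterCells l = 0} = ↑F := by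
    ext l
    simp only [Set.mem_setOf_eq, hF, Finset.coe_insert, Set.mem_insert_iff,
      Finset.coe_image, Set.mem_image, Finset.mem_coe]
    constructor
    · rintro ⟨hp, hs, hw⟩
      obtain ⟨a, b, c, rfl⟩ := struct _ hp ((waterCells_eq_zero_iff _).mp hw)
      rw [block_sum] at hs
      rcases Nat.eq_zero_or_pos b with rfl | hb
      · left
        have h0 : block a 0 c = List.replicate (a + c) 1 := by
          simp [block, ← List.replicate_add]
        rw [h0, show a + c = n from by omega]
      · right
        refine ⟨(a, a + 2*b), (mem_T n _).mpr ⟨by omega, by omega, by omega⟩, ?_⟩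
        show block a ((a + 2*b - a)/2) (n - (a + 2*b)) = block a b c
        rw [show (a + 2*b - a)/2 = b from by omega, show n - (a + 2*b) = c from by omega]
    · rintro (rfl | ⟨p, hp, rfl⟩)
      · refine ⟨fun x hx => ?_, by simp, ?_⟩
        · left; exact (List.eq_of_mem_replicate hx)
        · have h0 : List.replicate n 1 = block n 0 0 := by simp [block]
          rw [h0, waterCells_eq_zero_iff]
          exact NP_block _ _ _
      · rw [mem_T] at hp
        refine ⟨parts12_block _ _ _, ?_, (waterCells_eq_zero_iff _).mpr (NP_block _ _ _)⟩
        simp only [hg]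
        rw [block_sum]
        omega
  have hmem : List.replicate n 1 ∉ (T n).image g := by
    rintro hmem
    obtain ⟨p, hp, heq⟩ := Finset.mem_image.mp hmem
    rw [mem_T] at hp
    have h2 : (2 : ℕ) ∈ g p := by
      simp only [hg, block, List.mem_append, List.mem_replicate]
      right; left
      exact ⟨by omega, by trivial⟩
    rw [heq] at h2
    have := List.eq_of_mem_replicate h2
    omega
  have hinj : Set.InjOn g (T n) := by
    intro p hp q hq heq
    rw [Finset.mem_coe, mem_T] at hp hq
    obtain ⟨h1, h2, h3⟩ := block_inj (a := p.1) (a' := q.1)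
      (by omega : 0 < (p.2 - p.1)/2) (by omega : 0 < (q.2 - q.1)/2) heq
    have : p.2 = q.2 := by omega
    exact Prod.ext h1 this
  have : w n 0 = F.card := by
    rw [w, hset, Set.ncard_coe_finset]
  rw [this, hF, Finset.card_insert_of_notMem hmem, Finset.card_image_of_injOn hinj,
    card_T, sum_div2]

end Aux

lemma wzero_even (q : ℕ) : w (2*q) 0 = q*q + 1 := by
  rw [wzero, show 2*q/2 = q from by omega, show (2*q+1)/2 = q from by omega]

lemma wzero_odd (q : ℕ) : w (2*q+1) 0 = q*(q+1) + 1 := by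
  rw [wzero, show (2*q+1)/2 = q from by omega, show (2*q+1+1)/2 = q+1 from by omega]

theorem stmt5 (n : ℕ) (hn : 4 ≤ n) :
    (w n 0 : ℤ) = 2 * w (n - 1) 0 - 2 * w (n - 3) 0 + w (n - 4) 0 := by
  obtain ⟨m, rfl⟩ : ∃ m, n = m + 4 := ⟨n - 4, by omega⟩
  simp only [show m + 4 - 1 = m + 3 from by omega, show m + 4 - 3 = m + 1 from by omega,
    show m + 4 - 4 = m from by omega]
  rcases Nat.even_or_odd m with ⟨q, rfl⟩ | ⟨q, rfl⟩
  · rw [show q + q + 4 = 2*(q+2) from by omega, show q + q + 3 = 2*(q+1)+1 from by omega,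
      show q + q + 1 = 2*q+1 from by omega, show q + q = 2*q from by omega,
      wzero_even, wzero_odd, wzero_odd, wzero_even]
    push_cast
    ring
  · rw [show 2*q + 1 + 4 = 2*(q+2)+1 from by omega, show 2*q + 1 + 3 = 2*(q+2) from by omega,
      show 2*q + 1 + 1 = 2*(q+1) from by omega,
      wzero_odd, wzero_even, wzero_even, wzero_odd]
    push_cast
    ring
end

section
/- For every n ≥ 0, the diagonal sum d(n) = ∑_{k≥0} w(n-k, k) equals the number of compositions of n in which every internal part (every part other than the first and last) is even. -/
section Aux

def decode : List ℕ → List ℕ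
  | [] => [2]
  | x :: u => if x = 2 then 2 :: decode u else ((decode u).headI + 2) :: (decode u).tail

lemma decode_ne_nil (u : List ℕ) : decode u ≠ [] := by
  cases u with
  | nil => simp [decode]
  | cons x u => by_cases h : x = 2 <;> simp [decode, h]

lemma cons_headI_tail {l : List ℕ} (h : l ≠ []) : l.headI :: l.tail = l := by
  cases l with
  | nil => simp at h
  | cons a t => simp

lemma decode_sum (u : List ℕ) : (decode u).sum = 2 * u.length + 2 := by
  induction u with
  | nil => simp [decode]
  | cons x u ih =>
    by_cases h : x = 2
    · simp [decode, h, ih]; ring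
    · have hne := decode_ne_nil u
      have := cons_headI_tail hne
      simp only [decode, h, if_false]
      have hsum : (decode u).headI + (decode u).tail.sum = (decode u).sum := by
        conv_rhs => rw [← this]
        simp
      simp only [List.sum_cons, List.length_cons]
      omega

lemma decode_mem (u : List ℕ) : ∀ x ∈ decode u, Even x ∧ 2 ≤ x := by
  induction u with
  | nil => intro x hx; simp [decode] at hx; subst hx; exact ⟨even_two, le_refl 2⟩
  | cons y u ih =>
    intro x hx
    by_cases h : y = 2
    · simp [decode, h] at hx
      rcases hx with rfl | hx
      · exact ⟨even_two, le_refl 2⟩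
      · exact ih x hx
    · simp only [decode, h, if_false, List.mem_cons] at hx
      rcases hx with rfl | hx
      · have hh : (decode u).headI ∈ decode u := by
          have := cons_headI_tail (decode_ne_nil u)
          rw [← this]; simp
        obtain ⟨he, h2⟩ := ih _ hh
        exact ⟨by rcases he with ⟨k, hk⟩; exact ⟨k+1, by omega⟩, by omega⟩
      · have : x ∈ decode u := by
          have := cons_headI_tail (decode_ne_nil u)
          rw [← this]; simp [hx]
        exact ih x this

def encode : List ℕ → List ℕ
  | [] => []
  | [p] => List.replicate (p/2 - 1) 1
  | p :: q :: rest => List.replicate (p/2 - 1) 1 ++ 2 :: encode (q :: rest)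

lemma encode_mem (v : List ℕ) : ∀ x ∈ encode v, x = 1 ∨ x = 2 := by
  induction v with
  | nil => simp [encode]
  | cons p rest ih =>
    cases rest with
    | nil =>
      intro x hx; simp [encode] at hx; left; exact hx.2
    | cons q rest' =>
      intro x hx
      simp [encode] at hx
      rcases hx with ⟨_, rfl⟩ | rfl | hx
      · left; rfl
      · right; rfl
      · exact ih x hx

lemma decode_replicate_append (j : ℕ) (w : List ℕ) :
    decode (List.replicate j 1 ++ w) = ((decode w).headI + 2*j) :: (decode w).tail := by
  induction j with
  | zero => simp; exact (cons_headI_tail (decode_ne_nil w)).symm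
  | succ j ih =>
    rw [List.replicate_succ, List.cons_append]
    simp only [decode, if_neg (by norm_num : (1:ℕ) ≠ 2), ih]
    simp; ring

lemma decode_encode (v : List ℕ) (hne : v ≠ []) (h : ∀ x ∈ v, Even x ∧ 0 < x) :
    decode (encode v) = v := by
  induction v with
  | nil => simp at hne
  | cons p rest ih =>
    obtain ⟨⟨k, hk⟩, hp⟩ := h p (by simp)
    cases rest with
    | nil =>
      show decode (List.replicate (p/2 - 1) 1) = [p]
      have h2 := decode_replicate_append (p/2 - 1) []
      rw [List.append_nil] at h2
      rw [h2]
      simp [decode]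
      omega
    | cons q rest' =>
      show decode (List.replicate (p/2 - 1) 1 ++ 2 :: encode (q :: rest')) = _
      rw [decode_replicate_append]
      have hd : decode (2 :: encode (q :: rest')) = 2 :: decode (encode (q :: rest')) := by
        simp [decode]
      rw [hd]
      simp only [List.headI, List.tail]
      rw [ih (by simp) (fun x hx => h x (by simp [hx]))]
      congr 1
      omega


lemma encode_add_two (p : ℕ) (hp : 2 ≤ p) (t : List ℕ) :
    encode ((p+2) :: t) = 1 :: encode (p :: t) := by
  cases t with
  | nil =>
    show List.replicate ((p+2)/2 - 1) 1 = 1 :: List.replicate (p/2 - 1) 1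
    rw [← List.replicate_succ]
    congr 1
    omega
  | cons q rest =>
    show List.replicate ((p+2)/2 - 1) 1 ++ 2 :: encode (q :: rest)
       = 1 :: (List.replicate (p/2 - 1) 1 ++ 2 :: encode (q :: rest))
    rw [show (p+2)/2 - 1 = (p/2 - 1) + 1 by omega, List.replicate_succ]
    simp

lemma encode_decode (u : List ℕ) (h : ∀ x ∈ u, x = 1 ∨ x = 2) :
    encode (decode u) = u := by
  induction u with
  | nil => show encode [2] = []; show List.replicate (2/2-1) 1 = []; norm_num
  | cons y u ih =>
    have hu : ∀ x ∈ u, x = 1 ∨ x = 2 := fun x hx => h x (by simp [hx])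
    rcases h y (by simp) with rfl | rfl
    · -- y = 1
      have hne := decode_ne_nil u
      obtain ⟨hd, tl, hdt⟩ : ∃ hd tl, decode u = hd :: tl := by
        cases hdec : decode u with
        | nil => exact absurd hdec hne
        | cons a b => exact ⟨a, b, rfl⟩
      have hhd : Even hd ∧ 2 ≤ hd := decode_mem u hd (by rw [hdt]; simp)
      have : decode (1 :: u) = (hd + 2) :: tl := by
        simp [decode, hdt]
      rw [this, encode_add_two hd hhd.2, ← hdt, ih hu]
    · -- y = 2
      have : decode (2 :: u) = 2 :: decode u := by simp [decode]
      rw [this]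
      have hne := decode_ne_nil u
      obtain ⟨hd, tl, hdt⟩ : ∃ hd tl, decode u = hd :: tl := by
        cases hdec : decode u with
        | nil => exact absurd hdec hne
        | cons a b => exact ⟨a, b, rfl⟩
      rw [hdt]
      show List.replicate (2/2 - 1) 1 ++ 2 :: encode (hd :: tl) = 2 :: u
      rw [← hdt, ih hu]
      norm_num


def L3 (a b : ℕ) (u : List ℕ) : List ℕ :=
  List.replicate a 1 ++ 2 :: (u ++ 2 :: List.replicate b 1)

lemma L3_length (a b : ℕ) (u : List ℕ) : (L3 a b u).length = a + u.length + b + 2 := by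
  simp [L3]; omega

lemma L3_get_lo (a b : ℕ) (u : List ℕ) (i : ℕ) (h : i < a) :
    (L3 a b u)[i]'(by rw [L3_length]; omega) = 1 := by
  unfold L3
  rw [List.getElem_append_left (by simpa using h)]
  simp

lemma L3_get_a (a b : ℕ) (u : List ℕ) :
    (L3 a b u)[a]'(by rw [L3_length]; omega) = 2 := by
  unfold L3
  rw [List.getElem_append_right (by simp)]
  simp

lemma L3_get_mid (a b : ℕ) (u : List ℕ) (j : ℕ) (h : j < u.length) :
    (L3 a b u)[a+1+j]'(by rw [L3_length]; omega) = u[j] := by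
  unfold L3
  rw [List.getElem_append_right (by first | omega | (simp only [List.length_replicate, List.length_append, List.length_cons]; omega))]
  simp only [List.length_replicate]
  rw [List.getElem_cons]
  rw [dif_neg (by omega)]
  rw [List.getElem_append_left (by simpa using (by omega : a + 1 + j - a - 1 < u.length))]
  congr 1
  omega

lemma L3_get_m2 (a b : ℕ) (u : List ℕ) :
    (L3 a b u)[a+1+u.length]'(by rw [L3_length]; omega) = 2 := by
  unfold L3
  rw [List.getElem_append_right (by first | omega | (simp only [List.length_replicate, List.length_append, List.length_cons]; omega))]
  simp only [List.length_replicate]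
  rw [List.getElem_cons]
  rw [dif_neg (by omega)]
  rw [List.getElem_append_right (by first | omega | (simp only [List.length_replicate, List.length_append, List.length_cons]; omega))]
  rw [List.getElem_cons]
  rw [dif_pos (by first | omega | (simp only [List.length_replicate, List.length_append, List.length_cons]; omega))]

lemma L3_get_hi (a b : ℕ) (u : List ℕ) (i : ℕ) (h : a + 1 + u.length < i)
    (hi : i < (L3 a b u).length) :
    (L3 a b u)[i] = 1 := by
  have hlen := L3_length a b u
  show (List.replicate a 1 ++ 2 :: (u ++ 2 :: List.replicate b 1))[i]'(by simpa [L3] using hi) = 1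
  rw [List.getElem_append_right (by first | omega | (simp only [List.length_replicate, List.length_append, List.length_cons]; omega))]
  simp only [List.length_replicate]
  rw [List.getElem_cons]
  rw [dif_neg (by omega)]
  rw [List.getElem_append_right (by first | omega | (simp only [List.length_replicate, List.length_append, List.length_cons]; omega))]
  rw [List.getElem_cons]
  rw [dif_neg (by first | omega | (simp only [List.length_replicate, List.length_append, List.length_cons]; omega))]
  simp

theorem cnt (u : List ℕ) : (Finset.univ.filter (fun j : Fin u.length => u.get j = 1)).card = u.count 1 := by
  rw [Finset.card_filter]
  induction u with
  | nil => simp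
  | cons x v ih =>
    have : (∑ i : Fin (x :: v).length, if (x :: v).get i = 1 then 1 else 0)
        = (if x = 1 then 1 else 0) + ∑ i : Fin v.length, if v.get i = 1 then 1 else 0 :=
      Fin.sum_univ_succ _
    rw [this, List.count_cons, ih]
    by_cases h : x = 1 <;> simp [h, beq_iff_eq, Nat.add_comm]

lemma water_rep (a : ℕ) : waterCells (List.replicate a 1) = 0 := by
  unfold waterCells
  convert Set.ncard_empty (Fin (List.replicate a 1).length)
  ext i
  simp only [Set.mem_setOf_eq, Set.mem_empty_iff_false, iff_false, not_and]
  intro h1 ⟨j, hj, hj2⟩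
  rw [List.get_eq_getElem, List.getElem_replicate] at hj2
  exact absurd hj2 (by norm_num)

lemma L2_get (a b i : ℕ) (hi : i < (List.replicate a 1 ++ 2 :: List.replicate b 1).length) :
    (List.replicate a 1 ++ 2 :: List.replicate b 1)[i] = if i = a then 2 else 1 := by
  by_cases h1 : i < a
  · rw [List.getElem_append_left (by simpa using h1)]
    rw [List.getElem_replicate, if_neg (by omega)]
  · rw [List.getElem_append_right (by simpa using h1)]
    simp only [List.length_replicate]
    rw [List.getElem_cons]
    by_cases h2 : i = a
    · rw [dif_pos (by omega)]; simp [h2]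
    · rw [dif_neg (by omega)]
      simp only [List.getElem_replicate]
      simp [h2]

lemma getElem_idx (l : List ℕ) {i j : ℕ} (h : i = j) (hi : i < l.length)
    (hj : j < l.length) : l[i]'hi = l[j]'hj := by subst h; rfl

lemma water_one (a b : ℕ) : waterCells (List.replicate a 1 ++ 2 :: List.replicate b 1) = 0 := by
  unfold waterCells
  convert Set.ncard_empty (Fin _)
  ext i
  simp only [Set.mem_setOf_eq, Set.mem_empty_iff_false, iff_false, not_and]
  intro h1 hB hC
  obtain ⟨j1, hj1lt, hj1⟩ := hB
  obtain ⟨j2, hj2lt, hj2⟩ := hC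
  rw [List.get_eq_getElem, L2_get a b j1 j1.isLt] at hj1
  rw [List.get_eq_getElem, L2_get a b j2 j2.isLt] at hj2
  have e1 : (j1:ℕ) = a := by by_contra hc; rw [if_neg hc] at hj1; omega
  have e2 : (j2:ℕ) = a := by by_contra hc; rw [if_neg hc] at hj2; omega
  have h12 : (j1:ℕ) < (j2:ℕ) := Fin.lt_def.mp (lt_trans hj1lt hj2lt)
  omega


lemma water_L3 (a b : ℕ) (u : List ℕ) : waterCells (L3 a b u) = u.count 1 := by
  unfold waterCells
  have hlen := L3_length a b u
  have hset : {i : Fin (L3 a b u).length | (L3 a b u).get i = 1 ∧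
      (∃ j, j < i ∧ (L3 a b u).get j = 2) ∧ (∃ j, i < j ∧ (L3 a b u).get j = 2)}
      = {i : Fin (L3 a b u).length | a + 1 ≤ (i:ℕ) ∧ (i:ℕ) < a + 1 + u.length ∧
          u.getD ((i:ℕ) - (a+1)) 0 = 1} := by
    ext i
    simp only [Set.mem_setOf_eq, List.get_eq_getElem]
    constructor
    · rintro ⟨h1, ⟨j1, hj1lt, hj1⟩, ⟨j2, hj2lt, hj2⟩⟩
      have hj1i : (j1:ℕ) < (i:ℕ) := Fin.lt_def.mp hj1lt
      have hij2 : (i:ℕ) < (j2:ℕ) := Fin.lt_def.mp hj2lt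
      have hia : a < (i:ℕ) := by
        by_contra hc
        push_neg at hc
        rcases lt_or_eq_of_le hc with hlt | heq
        · have : (L3 a b u)[(j1:ℕ)]'j1.isLt = 1 := L3_get_lo a b u j1 (by omega)
          omega
        · have : (L3 a b u)[(i:ℕ)]'i.isLt = 2 :=
            (getElem_idx _ heq i.isLt (by rw [L3_length]; omega)).trans (L3_get_a a b u)
          omega
      have him : (i:ℕ) < a + 1 + u.length := by
        by_contra hc
        push_neg at hc
        rcases lt_or_eq_of_le hc with hlt | heq
        · have : (L3 a b u)[(j2:ℕ)]'j2.isLt = 1 := L3_get_hi a b u j2 (by omega) j2.isLt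
          omega
        · have : (L3 a b u)[(i:ℕ)]'i.isLt = 2 :=
            (getElem_idx _ heq.symm i.isLt (by rw [L3_length]; omega)).trans (L3_get_m2 a b u)
          omega
      refine ⟨by omega, him, ?_⟩
      have hb : (i:ℕ) - (a+1) < u.length := by omega
      rw [List.getD_eq_getElem u 0 hb]
      calc u[(i:ℕ)-(a+1)]'hb
          = (L3 a b u)[a+1+((i:ℕ)-(a+1))]'(by omega) :=
            (L3_get_mid a b u _ hb).symm
        _ = (L3 a b u)[(i:ℕ)]'i.isLt :=
            getElem_idx _ (by omega) _ _
        _ = 1 := h1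
    · rintro ⟨h1, h2, h3⟩
      have hb : (i:ℕ) - (a+1) < u.length := by omega
      rw [List.getD_eq_getElem u 0 hb] at h3
      have hval : (L3 a b u)[(i:ℕ)]'i.isLt = 1 := by
        calc (L3 a b u)[(i:ℕ)]'i.isLt
            = (L3 a b u)[a+1+((i:ℕ)-(a+1))]'(by omega) :=
              getElem_idx _ (by omega) _ _
          _ = u[(i:ℕ)-(a+1)]'hb := L3_get_mid a b u _ hb
          _ = 1 := h3
      refine ⟨hval, ⟨⟨a, by omega⟩, Fin.lt_def.mpr (by simpa using (by omega : a < (i:ℕ))),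
          L3_get_a a b u⟩,
        ⟨⟨a+1+u.length, by omega⟩, Fin.lt_def.mpr (by simpa using (by omega : (i:ℕ) < a+1+u.length)),
          L3_get_m2 a b u⟩⟩
  rw [hset, Set.ncard_eq_toFinset_card', Set.toFinset_setOf, ← cnt u]
  refine Finset.card_bij' (fun i hi => (⟨(i:ℕ) - (a+1), by
      have h := (Finset.mem_filter.mp hi).2; omega⟩ : Fin u.length))
    (fun j hj => (⟨a+1+(j:ℕ), by rw [L3_length]; omega⟩ : Fin (L3 a b u).length)) ?_ ?_ ?_ ?_
  · intro i hi
    have h := (Finset.mem_filter.mp hi).2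
    obtain ⟨h1, h2, h3⟩ := h
    rw [Finset.mem_filter]
    refine ⟨Finset.mem_univ _, ?_⟩
    show u.get _ = 1
    rw [List.get_eq_getElem]
    rw [List.getD_eq_getElem u 0 (by omega : (i:ℕ)-(a+1) < u.length)] at h3
    exact h3
  · intro j hj
    rw [Finset.mem_filter]
    refine ⟨Finset.mem_univ _, by first | (simp; omega) | simp | omega, by first | (simp; omega) | simp | omega, ?_⟩
    show u.getD ((a+1+(j:ℕ)) - (a+1)) 0 = 1
    have h := (Finset.mem_filter.mp hj).2
    rw [List.get_eq_getElem] at h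
    rw [show (a+1+(j:ℕ)) - (a+1) = (j:ℕ) by omega, List.getD_eq_getElem u 0 j.isLt]
    exact h
  · intro i hi
    have h := (Finset.mem_filter.mp hi).2
    ext
    simp
    omega
  · intro j hj
    ext
    simp


noncomputable def F (l : List ℕ) : List ℕ :=
  let a := (l.takeWhile (fun x => x == 1)).length
  let r := l.dropWhile (fun x => x == 1)
  if r = [] then (if a = 0 then [] else [a])
  else
    let t := r.tail
    let b := (t.reverse.takeWhile (fun x => x == 1)).length
    let u' := (t.reverse.dropWhile (fun x => x == 1)).reverse
    if u' = [] then [a+1, b+1]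
    else (a+1) :: (decode u'.dropLast ++ [b+1])

lemma tw_rep (a : ℕ) : (List.replicate a 1).takeWhile (fun x => x == 1) = List.replicate a 1 := by
  induction a with
  | zero => simp
  | succ a ih => rw [List.replicate_succ]; simp [List.takeWhile_cons, ih]

lemma dw_rep (a : ℕ) : (List.replicate a 1).dropWhile (fun x => x == 1) = [] := by
  induction a with
  | zero => simp
  | succ a ih => rw [List.replicate_succ]; simp [List.dropWhile_cons, ih]

lemma tw_rep2 (a : ℕ) (s : List ℕ) :
    (List.replicate a 1 ++ 2 :: s).takeWhile (fun x => x == 1) = List.replicate a 1 := by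
  induction a with
  | zero => simp [List.takeWhile_cons]
  | succ a ih => rw [List.replicate_succ]; simp only [List.cons_append, List.takeWhile_cons]; simp [ih]

lemma dw_rep2 (a : ℕ) (s : List ℕ) :
    (List.replicate a 1 ++ 2 :: s).dropWhile (fun x => x == 1) = 2 :: s := by
  induction a with
  | zero => simp [List.dropWhile_cons]
  | succ a ih => rw [List.replicate_succ]; simp only [List.cons_append, List.dropWhile_cons]; simp [ih]

lemma F_rep (a : ℕ) : F (List.replicate a 1) = if a = 0 then [] else [a] := by
  unfold F
  simp [tw_rep, dw_rep]

lemma F_one (a b : ℕ) : F (List.replicate a 1 ++ 2 :: List.replicate b 1) = [a+1, b+1] := by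
  unfold F
  rw [if_neg (by rw [dw_rep2]; simp)]
  simp only [tw_rep2, dw_rep2, List.length_replicate, List.tail_cons, List.reverse_replicate]
  rw [tw_rep, dw_rep]
  simp

lemma F_two (a b : ℕ) (u : List ℕ) :
    F (List.replicate a 1 ++ 2 :: (u ++ 2 :: List.replicate b 1))
      = (a+1) :: (decode u ++ [b+1]) := by
  unfold F
  rw [if_neg (by rw [dw_rep2]; simp)]
  simp only [tw_rep2, dw_rep2, List.length_replicate, List.tail_cons]
  have hrev : (u ++ 2 :: List.replicate b 1).reverse = List.replicate b 1 ++ 2 :: u.reverse := by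
    simp [List.reverse_cons, List.reverse_append]
  rw [hrev, tw_rep2, dw_rep2]
  have : (2 :: u.reverse).reverse = u ++ [2] := by simp
  rw [this]
  rw [if_neg (by simp)]
  rw [List.dropLast_concat]
  simp


lemma split1 (l : List ℕ) (h : Parts12 l) :
    ∃ a r, l = List.replicate a 1 ++ r ∧ (r = [] ∨ ∃ t, r = 2 :: t) := by
  refine ⟨(l.takeWhile (fun x => x == 1)).length, l.dropWhile (fun x => x == 1), ?_, ?_⟩
  · have h1 : l.takeWhile (fun x => x == 1) = List.replicate (l.takeWhile (fun x => x == 1)).length 1 := by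
      apply List.eq_replicate_of_mem
      intro b hb
      simpa using List.mem_takeWhile_imp hb
    conv_lhs => rw [← List.takeWhile_append_dropWhile (p := fun x => x == 1) (l := l)]
    rw [← h1]
  · rcases eq_or_ne (l.dropWhile (fun x => x == 1)) [] with he | he
    · exact Or.inl he
    · refine Or.inr ⟨(l.dropWhile (fun x => x == 1)).tail, ?_⟩
      have hh := List.head_dropWhile_not (fun x => x == 1) he
      have hmem : (l.dropWhile (fun x => x == 1)).head he ∈ l :=
        (List.dropWhile_sublist _).subset (List.head_mem he)
      have h2 : (l.dropWhile (fun x => x == 1)).head he = 2 := by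
        rcases h _ hmem with h' | h'
        · simp [h'] at hh
        · exact h'
      rw [← h2]
      exact (List.cons_head_tail he).symm

lemma parts12_decomp (l : List ℕ) (h : Parts12 l) :
    (∃ a, l = List.replicate a 1) ∨
    (∃ a b, l = List.replicate a 1 ++ 2 :: List.replicate b 1) ∨
    (∃ a u b, (∀ x ∈ u, x = 1 ∨ x = 2) ∧ l = L3 a b u) := by
  obtain ⟨a, r, hl, hr⟩ := split1 l h
  rcases hr with rfl | ⟨t, rfl⟩
  · exact Or.inl ⟨a, by simpa using hl⟩
  · have ht : Parts12 t.reverse := by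
      intro x hx
      apply h
      rw [hl]
      simp at hx
      simp [hx]
    obtain ⟨b, r2, hl2, hr2⟩ := split1 t.reverse ht
    rcases hr2 with rfl | ⟨s, rfl⟩
    · refine Or.inr (Or.inl ⟨a, b, ?_⟩)
      rw [hl]
      have : t = List.replicate b 1 := by
        have := congrArg List.reverse hl2
        simpa using this
      rw [this]
    · refine Or.inr (Or.inr ⟨a, s.reverse, b, ?_, ?_⟩)
      · intro x hx
        apply h
        rw [hl]
        have hxt : x ∈ t.reverse := by
          rw [hl2]
          simp only [List.mem_append, List.mem_cons]
          right; right
          simpa using hx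
        simp only [List.mem_reverse] at hxt
        simp [hxt]
      · rw [hl]
        have : t = s.reverse ++ 2 :: List.replicate b 1 := by
          have := congrArg List.reverse hl2
          simpa using this
        rw [this, L3]

lemma sum12 (u : List ℕ) (h : ∀ x ∈ u, x = 1 ∨ x = 2) :
    u.sum + u.count 1 = 2 * u.length := by
  induction u with
  | nil => simp
  | cons x v ih =>
    have hv := ih (fun y hy => h y (by simp [hy]))
    rw [List.sum_cons, List.count_cons, List.length_cons]
    rcases h x (by simp) with rfl | rfl <;> simp <;> omega

lemma len_le_sum (l : List ℕ) (h : ∀ x ∈ l, 0 < x) : l.length ≤ l.sum := by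
  induction l with
  | nil => simp
  | cons x v ih =>
    have := ih (fun y hy => h y (by simp [hy]))
    have := h x (by simp)
    simp only [List.length_cons, List.sum_cons]
    omega


lemma S_finite (n : ℕ) : {l : List ℕ | Parts12 l ∧ l.sum + waterCells l = n}.Finite := by
  apply Set.Finite.subset (Set.Finite.image (List.map fun b : Bool => if b then 2 else 1)
    (List.finite_length_le Bool n))
  rintro l ⟨hp, hs⟩
  refine ⟨l.map (fun x => x == 2), ?_, ?_⟩
  · simp only [Set.mem_setOf_eq, List.length_map]
    have h1 : l.length ≤ l.sum := len_le_sum l (fun x hx => by rcases hp x hx with rfl | rfl <;> norm_num)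
    omega
  · rw [List.map_map]
    conv_rhs => rw [← List.map_id l]
    apply List.map_congr_left
    intro x hx
    rcases hp x hx with rfl | rfl <;> simp

lemma d_eq_ncard (n : ℕ) :
    d n = {l : List ℕ | Parts12 l ∧ l.sum + waterCells l = n}.ncard := by
  classical
  set S := {l : List ℕ | Parts12 l ∧ l.sum + waterCells l = n} with hS
  have hfin := S_finite n
  set Sf := hfin.toFinset with hSf
  have hmem : ∀ l, l ∈ Sf ↔ (Parts12 l ∧ l.sum + waterCells l = n) := by
    intro l
    rw [hSf, Set.Finite.mem_toFinset]
    rfl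
  have hw : ∀ l ∈ Sf, waterCells l ∈ Finset.range (n+1) := by
    intro l hl
    rw [hmem] at hl
    rw [Finset.mem_range]
    omega
  have hcard := Finset.card_eq_sum_card_fiberwise hw
  have hterm : ∀ k ∈ Finset.range (n+1), w (n - k) k
      = (Sf.filter (fun l => waterCells l = k)).card := by
    intro k hk
    rw [Finset.mem_range] at hk
    rw [w, ← Set.ncard_coe_finset]
    congr 1
    ext l
    simp only [Set.mem_setOf_eq, Finset.coe_filter, hmem]
    constructor
    · rintro ⟨h1, h2, h3⟩
      exact ⟨⟨h1, by omega⟩, h3⟩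
    · rintro ⟨⟨h1, h2⟩, h3⟩
      exact ⟨h1, by omega, h3⟩
  rw [d, Finset.sum_congr rfl hterm, ← hcard]
  rw [hSf, ← Set.ncard_coe_finset, Set.Finite.coe_toFinset]

end Aux

lemma F_two' (a b : ℕ) (u : List ℕ) :
    F (L3 a b u) = (a+1) :: (decode u ++ [b+1]) := F_two a b u

lemma L3_sum (a b : ℕ) (u : List ℕ) : (L3 a b u).sum = a + u.sum + b + 4 := by
  simp [L3, List.sum_append, List.sum_replicate, smul_eq_mul]
  omega

lemma parts12_L3 (a b : ℕ) (u : List ℕ) (hu : ∀ x ∈ u, x = 1 ∨ x = 2) :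
    Parts12 (L3 a b u) := by
  intro x hx
  simp only [L3, List.mem_append, List.mem_cons, List.mem_replicate] at hx
  rcases hx with ⟨_, rfl⟩ | rfl | hx | rfl | ⟨_, rfl⟩
  · left; rfl
  · right; rfl
  · exact hu x hx
  · right; rfl
  · left; rfl

lemma F_inj (l1 l2 : List ℕ) (h1 : Parts12 l1) (h2 : Parts12 l2) (hF : F l1 = F l2) :
    l1 = l2 := by
  rcases parts12_decomp l1 h1 with ⟨a1, rfl⟩ | ⟨a1, b1, rfl⟩ | ⟨a1, u1, b1, hu1, rfl⟩ <;>
    rcases parts12_decomp l2 h2 with ⟨a2, rfl⟩ | ⟨a2, b2, rfl⟩ | ⟨a2, u2, b2, hu2, rfl⟩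
  · rw [F_rep, F_rep] at hF
    by_cases e1 : a1 = 0 <;> by_cases e2 : a2 = 0 <;>
      simp [e1, e2] at hF <;> simp [e1, e2, hF]
  · rw [F_rep, F_one] at hF
    by_cases e1 : a1 = 0 <;> simp [e1] at hF
  · rw [F_rep, F_two'] at hF
    by_cases e1 : a1 = 0 <;> simp [e1] at hF <;>
      try exact absurd (List.append_eq_nil.mp hF.2.symm).1 (decode_ne_nil u2)
  · rw [F_one, F_rep] at hF
    by_cases e2 : a2 = 0 <;> simp [e2] at hF
  · rw [F_one, F_one] at hF
    simp at hF
    simp [hF.1, hF.2]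
  · rw [F_one, F_two'] at hF
    exfalso
    have := congrArg List.length hF
    simp at this
    exact absurd this (decode_ne_nil u2)
  · rw [F_two', F_rep] at hF
    by_cases e2 : a2 = 0 <;> simp [e2] at hF <;>
      try exact absurd (List.append_eq_nil.mp hF.2).1 (decode_ne_nil u1)
  · rw [F_two', F_one] at hF
    exfalso
    have := congrArg List.length hF
    simp at this
    exact absurd this (decode_ne_nil u1)
  · rw [F_two', F_two'] at hF
    simp only [List.cons.injEq] at hF
    obtain ⟨ha, htl⟩ := hF
    obtain ⟨hdec, hb⟩ := List.append_inj' htl (by simp)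
    have hu : u1 = u2 := by
      rw [← encode_decode u1 hu1, ← encode_decode u2 hu2, hdec]
    simp only [List.cons.injEq] at hb
    rw [show a1 = a2 by omega, hu, show b1 = b2 by omega]

lemma F_mem (n : ℕ) (l : List ℕ) (hl : l ∈ {l : List ℕ | Parts12 l ∧ l.sum + waterCells l = n}) :
    F l ∈ {l : List ℕ | IsComposition n l ∧ InternalEven l} := by
  obtain ⟨hp, hsum⟩ := hl
  rcases parts12_decomp l hp with ⟨a, rfl⟩ | ⟨a, b, rfl⟩ | ⟨a, u, b, hu, rfl⟩
  · rw [water_rep] at hsum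
    rw [F_rep]
    simp only [List.sum_replicate, smul_eq_mul, mul_one] at hsum
    by_cases e : a = 0
    · rw [if_pos e]
      refine ⟨⟨by intro x hx; simp at hx, by simp; omega⟩, ?_⟩
      intro x hx; simp at hx
    · rw [if_neg e]
      refine ⟨⟨?_, ?_⟩, ?_⟩
      · intro x hx; simp at hx; omega
      · simp; omega
      · intro x hx; simp at hx
  · rw [water_one] at hsum
    simp only [List.sum_append, List.sum_cons, List.sum_replicate, smul_eq_mul, mul_one] at hsum
    rw [F_one]
    refine ⟨⟨?_, ?_⟩, ?_⟩
    · intro x hx; simp at hx; rcases hx with rfl | rfl <;> omega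
    · simp; omega
    · intro x hx; simp at hx
  · rw [water_L3] at hsum
    rw [L3_sum] at hsum
    have hs12 := sum12 u hu
    rw [F_two']
    refine ⟨⟨?_, ?_⟩, ?_⟩
    · intro x hx
      simp at hx
      rcases hx with rfl | hx | rfl
      · omega
      · have := (decode_mem u x hx).2; omega
      · omega
    · rw [List.sum_cons, List.sum_append, List.sum_singleton, decode_sum]
      omega
    · intro x hx
      simp only [List.drop_one, List.tail_cons] at hx
      rw [List.dropLast_concat] at hx
      exact (decode_mem u x hx).1

lemma F_surj (n : ℕ) (v : List ℕ)
    (hv : v ∈ {l : List ℕ | IsComposition n l ∧ InternalEven l}) :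
    ∃ l ∈ {l : List ℕ | Parts12 l ∧ l.sum + waterCells l = n}, F l = v := by
  obtain ⟨⟨hpos, hsum⟩, hev⟩ := hv
  rcases v with _ | ⟨c1, t⟩
  · refine ⟨[], ⟨?_, ?_⟩, ?_⟩
    · intro x hx; simp at hx
    · have : waterCells ([] : List ℕ) = 0 := by
        have := water_rep 0
        simpa using this
      simp at hsum
      simp [this]
      omega
    · have := F_rep 0
      simpa using this
  · rcases List.eq_nil_or_concat t with rfl | ⟨mid, c2, hteq⟩
    · -- v = [c1]
      have hc1 : c1 = n := by simpa using hsum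
      have hc1pos : 0 < c1 := hpos c1 (by simp)
      refine ⟨List.replicate n 1, ⟨?_, ?_⟩, ?_⟩
      · intro x hx; simp at hx; left; exact hx.2
      · rw [water_rep]; simp
      · rw [F_rep, if_neg (by omega), hc1]
    · rw [List.concat_eq_append] at hteq
      subst hteq
      rcases mid with _ | ⟨m0, mrest⟩
      · -- v = [c1, c2]
        have hc1 : 0 < c1 := hpos c1 (by simp)
        have hc2 : 0 < c2 := hpos c2 (by simp)
        have hsum2 : c1 + c2 = n := by simpa using hsum
        refine ⟨List.replicate (c1-1) 1 ++ 2 :: List.replicate (c2-1) 1, ⟨?_, ?_⟩, ?_⟩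
        · intro x hx
          simp only [List.mem_append, List.mem_cons, List.mem_replicate] at hx
          rcases hx with ⟨_, rfl⟩ | rfl | ⟨_, rfl⟩
          · left; rfl
          · right; rfl
          · left; rfl
        · rw [water_one]
          simp [List.sum_append, List.sum_replicate, smul_eq_mul]
          omega
        · rw [F_one]
          simp only [List.nil_append]
          congr 2 <;> omega
      · -- v = c1 :: mid ++ [c2], mid = m0 :: mrest nonempty
        set mid := m0 :: mrest with hmid
        have hc1 : 0 < c1 := hpos c1 (by simp)
        have hc2 : 0 < c2 := hpos c2 (by simp [hmid])
        have hmidev : ∀ x ∈ mid, Even x := by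
          intro x hx
          apply hev
          simp only [List.drop_one, List.tail_cons]
          rw [List.dropLast_concat]
          exact hx
        have hmidpos : ∀ x ∈ mid, 0 < x := by
          intro x hx
          apply hpos
          simp only [List.mem_cons, List.mem_append]
          right; left; exact hx
        set u := encode mid with hu
        have hdec : decode u = mid := decode_encode mid (by simp [hmid])
          (fun x hx => ⟨hmidev x hx, hmidpos x hx⟩)
        have humem : ∀ x ∈ u, x = 1 ∨ x = 2 := encode_mem mid
        refine ⟨L3 (c1-1) (c2-1) u, ⟨parts12_L3 _ _ _ humem, ?_⟩, ?_⟩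
        · rw [water_L3, L3_sum]
          have hs12 := sum12 u humem
          have hds : mid.sum = 2 * u.length + 2 := by rw [← hdec, decode_sum]
          have : (c1 :: (mid ++ [c2])).sum = c1 + mid.sum + c2 := by
            simp [List.sum_append]
            omega
          rw [this] at hsum
          omega
        · rw [F_two', hdec, show c1-1+1 = c1 by omega, show c2-1+1 = c2 by omega]

theorem stmt11 (n : ℕ) :
    d n = {l : List ℕ | IsComposition n l ∧ InternalEven l}.ncard := by
  rw [d_eq_ncard]
  have himg : F '' {l : List ℕ | Parts12 l ∧ l.sum + waterCells l = n}
      = {l : List ℕ | IsComposition n l ∧ InternalEven l} := by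
    ext v
    constructor
    · rintro ⟨l, hl, rfl⟩
      exact F_mem n l hl
    · intro hv
      obtain ⟨l, hl, hFl⟩ := F_surj n v hv
      exact ⟨l, hl, hFl⟩
  rw [← himg]
  rw [Set.ncard_image_of_injOn (fun l1 hl1 l2 hl2 hF => F_inj l1 l2 hl1.1 hl2.1 hF)]
end
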